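/- arXiv:1410.1176 — 2 statements merged into one kernel-verified Lean document; each statement's English description precedes it below -/
import Mathlib

section
/- Let N ≥ 2, let Ω ⊂ ℝ^N be a bounded convex open set, and suppose there is β₀ > 0 such that d is twice continuously differentiable on {x ∈ Ω : d(x) < β₀} with |∇d| = 1 there. Let u be a continuous C² function on Ω satisfying Δu(x) + u(x)/(4·d(x)²) ≥ 0 for every x ∈ Ω, and assume that for every ε > 0 there exists δ ∈ (0, 1) such that u(x) ≤ ε·√(d(x))·|log d(x)| whenever x ∈ Ω and d(x) < δ. Then u(x) ≤ 0 for every x ∈ Ω. -/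
open MeasureTheory

open Filter Topology RealInnerProductSpace

/-! ### Auxiliary 1-D barrier function `G(s) = √s (L + log L)`, `L = K - log s` -/

noncomputable def Gfun (K s : ℝ) : ℝ :=
  Real.sqrt s * ((K - Real.log s) + Real.log (K - Real.log s))

noncomputable def Gfun' (K s : ℝ) : ℝ :=
  (((K - Real.log s) + Real.log (K - Real.log s)) / 2 - 1 - (K - Real.log s)⁻¹) / Real.sqrt s

noncomputable def Gfun'' (K s : ℝ) : ℝ :=
  (-(((K - Real.log s)) ^ 2)⁻¹ - ((K - Real.log s) + Real.log (K - Real.log s)) / 4)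
    / (s * Real.sqrt s)

lemma hasDerivAt_Gfun {K s : ℝ} (hs : 0 < s) (hL : 0 < K - Real.log s) :
    HasDerivAt (Gfun K) (Gfun' K s) s := by
  have hners : Real.sqrt s ≠ 0 := (Real.sqrt_pos.2 hs).ne'
  have h1 : HasDerivAt (fun t : ℝ => K - Real.log t) (-s⁻¹) s := by
    simpa using (Real.hasDerivAt_log hs.ne').const_sub K
  have h2 : HasDerivAt (fun t : ℝ => Real.log (K - Real.log t))
      ((K - Real.log s)⁻¹ * -s⁻¹) s := by convert h1.log hL.ne' using 1; ring
  have h3 : HasDerivAt (fun t : ℝ => (K - Real.log t) + Real.log (K - Real.log t))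
      (-s⁻¹ + (K - Real.log s)⁻¹ * -s⁻¹) s := h1.add h2
  have h4 : HasDerivAt Real.sqrt (1 / (2 * Real.sqrt s)) s := Real.hasDerivAt_sqrt hs.ne'
  have h5 := h4.mul h3
  have hss : Real.sqrt s * Real.sqrt s = s := Real.mul_self_sqrt hs.le
  refine h5.congr_deriv (Eq.symm ?_)
  rw [Gfun']
  set l := Real.log s with hl
  set m := Real.log (K - l) with hm
  set r := Real.sqrt s with hrdef
  have hLne : K - l ≠ 0 := hL.ne'
  rw [← hss]
  field_simp
  ring

lemma hasDerivAt_Gfun' {K s : ℝ} (hs : 0 < s) (hL : 0 < K - Real.log s) :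
    HasDerivAt (Gfun' K) (Gfun'' K s) s := by
  have hners : Real.sqrt s ≠ 0 := (Real.sqrt_pos.2 hs).ne'
  have h1 : HasDerivAt (fun t : ℝ => K - Real.log t) (-s⁻¹) s := by
    simpa using (Real.hasDerivAt_log hs.ne').const_sub K
  have h2 : HasDerivAt (fun t : ℝ => Real.log (K - Real.log t))
      ((K - Real.log s)⁻¹ * -s⁻¹) s := by convert h1.log hL.ne' using 1; ring
  have h3 : HasDerivAt (fun t : ℝ => (K - Real.log t) + Real.log (K - Real.log t))
      (-s⁻¹ + (K - Real.log s)⁻¹ * -s⁻¹) s := h1.add h2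
  have hN : HasDerivAt (fun t : ℝ =>
      ((K - Real.log t) + Real.log (K - Real.log t)) / 2 - 1 - (K - Real.log t)⁻¹)
      ((-s⁻¹ + (K - Real.log s)⁻¹ * -s⁻¹) / 2 - (-(-s⁻¹) / (K - Real.log s) ^ 2)) s :=
    ((h3.div_const 2).sub_const 1).sub (h1.inv hL.ne')
  have h4 : HasDerivAt Real.sqrt (1 / (2 * Real.sqrt s)) s := Real.hasDerivAt_sqrt hs.ne'
  have hinv : HasDerivAt (fun t : ℝ => (Real.sqrt t)⁻¹)
      (-(1 / (2 * Real.sqrt s)) / (Real.sqrt s) ^ 2) s := h4.inv hners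
  have h6 := hN.mul hinv
  have hss : Real.sqrt s * Real.sqrt s = s := Real.mul_self_sqrt hs.le
  have hrw : Gfun' K = fun t =>
      (((K - Real.log t) + Real.log (K - Real.log t)) / 2 - 1 - (K - Real.log t)⁻¹)
        * (Real.sqrt t)⁻¹ := by
    funext t; rw [Gfun', div_eq_mul_inv]
  rw [hrw]
  refine h6.congr_deriv (Eq.symm ?_)
  rw [Gfun'']
  set l := Real.log s with hl
  set m := Real.log (K - l) with hm
  set r := Real.sqrt s with hrdef
  have hLne : K - l ≠ 0 := hL.ne'
  rw [← hss]
  field_simp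
  ring

lemma Gfun_supersol {K s : ℝ} (hs : 0 < s) (hL : 0 < K - Real.log s) :
    Gfun'' K s + Gfun K s / (4 * s ^ 2) < 0 := by
  have hrs : 0 < Real.sqrt s := Real.sqrt_pos.2 hs
  have hss : Real.sqrt s * Real.sqrt s = s := Real.mul_self_sqrt hs.le
  have heq : Gfun'' K s + Gfun K s / (4 * s ^ 2)
      = -(((K - Real.log s)) ^ 2)⁻¹ / (s * Real.sqrt s) := by
    rw [Gfun'', Gfun]
    set l := Real.log s with hl
    set m := Real.log (K - l) with hm
    set r := Real.sqrt s with hrdef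
    have hLne : K - l ≠ 0 := hL.ne'
    rw [← hss]
    field_simp
    ring
  rw [heq]
  apply div_neg_of_neg_of_pos
  · simp only [neg_neg, neg_lt, neg_zero]
    positivity
  · positivity

lemma Gfun_pos {K s : ℝ} (hs : 0 < s) (hL : 1 ≤ K - Real.log s) :
    0 < Gfun K s := by
  have hrs : 0 < Real.sqrt s := Real.sqrt_pos.2 hs
  have hlog : 0 ≤ Real.log (K - Real.log s) := Real.log_nonneg hL
  have : 0 < (K - Real.log s) + Real.log (K - Real.log s) := by linarith
  exact mul_pos hrs this

lemma Gfun'_nonneg {K s : ℝ} (hs : 0 < s) (hL : 3 ≤ K - Real.log s) :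
    0 ≤ Gfun' K s := by
  have hrs : 0 < Real.sqrt s := Real.sqrt_pos.2 hs
  have hL0 : (0:ℝ) < K - Real.log s := by linarith
  have hlog : 0 ≤ Real.log (K - Real.log s) := Real.log_nonneg (by linarith)
  have hinv : (K - Real.log s)⁻¹ ≤ 3⁻¹ := inv_anti₀ (by norm_num) hL
  apply div_nonneg _ hrs.le
  nlinarith

lemma Gfun_mono {K a b : ℝ} (ha : 0 < a) (hab : a ≤ b) (hK : 3 ≤ K - Real.log b) :
    Gfun K a ≤ Gfun K b := by
  rcases eq_or_lt_of_le hab with rfl | hlt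
  · exact le_refl _
  · have hb : 0 < b := lt_of_lt_of_le ha hab
    have hLs : ∀ s : ℝ, a ≤ s → s ≤ b → 3 ≤ K - Real.log s := by
      intro s h1 h2
      have : Real.log s ≤ Real.log b := Real.log_le_log (lt_of_lt_of_le ha h1) h2
      linarith
    have hcont : ContinuousOn (Gfun K) (Set.Icc a b) := fun s hsi =>
      (hasDerivAt_Gfun (lt_of_lt_of_le ha hsi.1)
        (by linarith [hLs s hsi.1 hsi.2])).continuousAt.continuousWithinAt
    have hd : ∀ s ∈ Set.Ioo a b, HasDerivAt (Gfun K) (Gfun' K s) s := fun s hsi =>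
      hasDerivAt_Gfun (lt_trans ha hsi.1) (by linarith [hLs s hsi.1.le hsi.2.le])
    obtain ⟨cc, hcc, hceq⟩ := exists_hasDerivAt_eq_slope (Gfun K) (Gfun' K) hlt hcont hd
    have h0 : 0 ≤ Gfun' K cc := Gfun'_nonneg (lt_trans ha hcc.1) (hLs cc hcc.1.le hcc.2.le)
    rw [hceq] at h0
    have hba : 0 < b - a := by linarith
    rcases div_nonneg_iff.mp h0 with ⟨h1, _⟩ | ⟨_, h2⟩
    · linarith
    · linarith

lemma Gfun_dominates {K s : ℝ} (hs : 0 < s) (hs1 : s < 1) (hK : 1 ≤ K) :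
    Real.sqrt s * |Real.log s| ≤ Gfun K s := by
  have hlneg : Real.log s < 0 := Real.log_neg hs hs1
  have habs : |Real.log s| = -Real.log s := abs_of_neg hlneg
  have hL1 : 1 ≤ K - Real.log s := by linarith
  have hlog : 0 ≤ Real.log (K - Real.log s) := Real.log_nonneg hL1
  rw [Gfun, habs]
  have hrs : 0 ≤ Real.sqrt s := Real.sqrt_nonneg s
  apply mul_le_mul_of_nonneg_left _ hrs
  linarith

lemma contDiffAt_Gfun {K s : ℝ} (hs : 0 < s) (hL : 0 < K - Real.log s) :
    ContDiffAt ℝ 2 (Gfun K) s := by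
  have h1 : ContDiffAt ℝ 2 (fun t : ℝ => K - Real.log t) s :=
    contDiffAt_const.sub (Real.contDiffAt_log.2 hs.ne')
  have h2 : ContDiffAt ℝ 2 (fun t : ℝ => Real.log (K - Real.log t)) s :=
    h1.log hL.ne'
  exact ((Real.contDiffAt_sqrt hs.ne').mul (h1.add h2))

/-! ### Second derivative test at a local maximum -/

lemma second_deriv_nonpos_of_isLocalMax {g q : ℝ → ℝ} {c : ℝ}
    (hg : ∀ᶠ t in 𝓝 (0:ℝ), HasDerivAt g (q t) t)
    (hq : HasDerivAt q c 0) (hmax : IsLocalMax g 0) : c ≤ 0 := by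
  by_contra hc
  push_neg at hc
  have hq0 : q 0 = 0 := by
    have h1 : deriv g 0 = q 0 := (hg.self_of_nhds).deriv
    have h2 : deriv g 0 = 0 := hmax.deriv_eq_zero
    rw [h1] at h2; exact h2
  have hslope : Tendsto (slope q 0) (𝓝[≠] 0) (𝓝 c) := hasDerivAt_iff_tendsto_slope.1 hq
  have hev : ∀ᶠ t in 𝓝[≠] (0:ℝ), 0 < slope q 0 t :=
    hslope.eventually (eventually_gt_nhds hc)
  have hev' : ∀ᶠ t in 𝓝[>] (0:ℝ), 0 < slope q 0 t :=
    hev.filter_mono (nhdsWithin_mono 0 (fun t ht => ne_of_gt ht))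
  rw [eventually_nhdsWithin_iff] at hev'
  obtain ⟨ε₁, hε₁, h₁⟩ := Metric.eventually_nhds_iff.1 hev'
  obtain ⟨ε₂, hε₂, h₂⟩ := Metric.eventually_nhds_iff.1 hg
  obtain ⟨ε₃, hε₃, h₃⟩ := Metric.eventually_nhds_iff.1 hmax
  set τ := min ε₁ (min ε₂ ε₃) / 2 with hτ
  have hτpos : 0 < τ := by positivity
  have hτ1 : τ < ε₁ := by
    simp only [hτ]
    linarith [min_le_left ε₁ (min ε₂ ε₃)]
  have hτ2 : τ < ε₂ := by
    simp only [hτ]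
    have := min_le_right ε₁ (min ε₂ ε₃)
    have := min_le_left ε₂ ε₃
    linarith
  have hτ3 : τ < ε₃ := by
    simp only [hτ]
    have := min_le_right ε₁ (min ε₂ ε₃)
    have := min_le_right ε₂ ε₃
    linarith
  have hders : ∀ t ∈ Set.Icc (0:ℝ) τ, HasDerivAt g (q t) t := by
    intro t ht
    apply h₂
    rw [Real.dist_eq, sub_zero, abs_of_nonneg ht.1]
    exact lt_of_le_of_lt ht.2 hτ2
  have hcont : ContinuousOn g (Set.Icc 0 τ) := fun t ht =>
    (hders t ht).continuousAt.continuousWithinAt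
  obtain ⟨ξ, hξ, hξeq⟩ := exists_hasDerivAt_eq_slope g q hτpos hcont
    (fun t ht => hders t ⟨ht.1.le, ht.2.le⟩)
  have hqξ : 0 < q ξ := by
    have h := h₁ (by rw [Real.dist_eq, sub_zero, abs_of_pos hξ.1]; exact lt_trans hξ.2 hτ1)
      (Set.mem_Ioi.2 hξ.1)
    have hsl : slope q 0 ξ = q ξ / ξ := by
      rw [slope_def_field]; simp [hq0]
    rw [hsl] at h
    rcases div_pos_iff.1 h with ⟨h1, _⟩ | ⟨_, h2⟩
    · exact h1
    · linarith [hξ.1]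
  have hgτ : g τ ≤ g 0 := h₃ (by rw [Real.dist_eq, sub_zero, abs_of_pos hτpos]; exact hτ3)
  rw [hξeq] at hqξ
  rcases div_pos_iff.1 hqξ with ⟨h1, _⟩ | ⟨_, h2⟩
  · linarith
  · linarith

lemma snd_dirderiv_nonpos_of_isLocalMax {E : Type*} [NormedAddCommGroup E] [NormedSpace ℝ E]
    {v : E → ℝ} {x : E} (hv : ContDiffAt ℝ 2 v x) (hmax : IsLocalMax v x) (e : E) :
    fderiv ℝ (fderiv ℝ v) x e e ≤ 0 := by
  obtain ⟨U, hU, hvU⟩ := hv.contDiffOn (le_refl 2) (by norm_num)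
  have hUo : interior U ∈ 𝓝 x := interior_mem_nhds.2 hU
  have hγ : ∀ t : ℝ, HasDerivAt (fun t : ℝ => x + t • e) e t := by
    intro t
    simpa using ((hasDerivAt_id t).smul_const e).const_add x
  have hγc : Continuous (fun t : ℝ => x + t • e) := by continuity
  have hγ0 : (fun t : ℝ => x + t • e) 0 = x := by simp
  set γ : ℝ → E := fun t => x + t • e with hγdef
  set g : ℝ → ℝ := fun t => v (γ t) with hgdef
  set q : ℝ → ℝ := fun t => fderiv ℝ v (γ t) e with hqdef
  have hγnb : ∀ᶠ t in 𝓝 (0:ℝ), γ t ∈ interior U := by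
    have : Filter.Tendsto γ (𝓝 0) (𝓝 x) := by
      rw [← hγ0]; exact hγc.continuousAt
    exact this.eventually_mem hUo
  have hg : ∀ᶠ t in 𝓝 (0:ℝ), HasDerivAt g (q t) t := by
    filter_upwards [hγnb] with t ht
    have hdiff : DifferentiableAt ℝ v (γ t) :=
      (hvU.contDiffAt (mem_interior_iff_mem_nhds.1 ht)).differentiableAt (by norm_num)
    exact (hdiff.hasFDerivAt.comp_hasDerivAt t (hγ t))
  have hF : ContDiffAt ℝ 1 (fderiv ℝ v) x := hv.fderiv_right (by norm_num)
  have hFd : DifferentiableAt ℝ (fderiv ℝ v) x := hF.differentiableAt (by norm_num)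
  have hq : HasDerivAt q (fderiv ℝ (fderiv ℝ v) x e e) 0 := by
    have hFd' : HasFDerivAt (fderiv ℝ v) (fderiv ℝ (fderiv ℝ v) x) (γ 0) := by
      rw [hγ0]; exact hFd.hasFDerivAt
    have h1 : HasDerivAt (fun t => fderiv ℝ v (γ t)) (fderiv ℝ (fderiv ℝ v) x e) 0 :=
      hFd'.comp_hasDerivAt 0 (hγ 0)
    have h2 := (ContinuousLinearMap.apply ℝ ℝ e).hasFDerivAt.comp_hasDerivAt 0 h1
    simpa [Function.comp_def, hqdef] using h2
  have hmaxg : IsLocalMax g 0 := by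
    have ht : Filter.Tendsto γ (𝓝 0) (𝓝 x) := by
      rw [← hγ0]; exact hγc.continuousAt
    have := ht.eventually hmax
    filter_upwards [this] with t htt
    simpa [hgdef, hγ0] using htt
  exact second_deriv_nonpos_of_isLocalMax hg hq hmaxg

/-! ### The barrier as a function on Euclidean space -/

noncomputable def tfn {N : ℕ} (w : EuclideanSpace ℝ (Fin N)) (c : ℝ)
    (z : EuclideanSpace ℝ (Fin N)) : ℝ := ⟪w, z⟫ - c

noncomputable def bar {N : ℕ} (w : EuclideanSpace ℝ (Fin N)) (c K : ℝ)
    (z : EuclideanSpace ℝ (Fin N)) : ℝ := Gfun K (tfn w c z)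

lemma tfn_hasFDerivAt {N : ℕ} (w : EuclideanSpace ℝ (Fin N)) (c : ℝ)
    (z : EuclideanSpace ℝ (Fin N)) : HasFDerivAt (tfn w c) (innerSL ℝ w) z := by
  exact ((innerSL ℝ w).hasFDerivAt (x := z)).sub_const c

lemma tfn_continuous {N : ℕ} (w : EuclideanSpace ℝ (Fin N)) (c : ℝ) :
    Continuous (tfn w c) := by
  unfold tfn
  exact ((innerSL ℝ w).continuous).sub continuous_const

lemma good_set_open {N : ℕ} (w : EuclideanSpace ℝ (Fin N)) (c K : ℝ) :
    IsOpen {z : EuclideanSpace ℝ (Fin N) |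
      0 < tfn w c z ∧ 0 < K - Real.log (tfn w c z)} := by
  have hSopen : IsOpen {s : ℝ | 0 < s ∧ 0 < K - Real.log s} := by
    have h1 : {s : ℝ | 0 < s ∧ 0 < K - Real.log s}
        = Set.Ioi 0 ∩ (fun s : ℝ => K - Real.log s) ⁻¹' (Set.Ioi 0) := by
      ext s; simp [Set.mem_Ioi]
    rw [h1]
    apply ContinuousOn.isOpen_inter_preimage _ isOpen_Ioi isOpen_Ioi
    exact continuousOn_const.sub (Real.continuousOn_log.mono (by
      intro s hs; simpa using (ne_of_gt hs)))
  exact hSopen.preimage (tfn_continuous w c)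

lemma bar_hasFDerivAt {N : ℕ} (w : EuclideanSpace ℝ (Fin N)) (c K : ℝ)
    {z : EuclideanSpace ℝ (Fin N)} (h1 : 0 < tfn w c z)
    (h2 : 0 < K - Real.log (tfn w c z)) :
    HasFDerivAt (bar w c K) (Gfun' K (tfn w c z) • innerSL ℝ w) z := by
  have := (hasDerivAt_Gfun h1 h2).comp_hasFDerivAt z (tfn_hasFDerivAt w c z)
  exact this

lemma bar_contDiffAt {N : ℕ} (w : EuclideanSpace ℝ (Fin N)) (c K : ℝ)
    {x : EuclideanSpace ℝ (Fin N)} (h1 : 0 < tfn w c x)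
    (h2 : 0 < K - Real.log (tfn w c x)) :
    ContDiffAt ℝ 2 (bar w c K) x := by
  have htcd : ContDiffAt ℝ 2 (tfn w c) x := by
    have : ContDiff ℝ 2 (tfn w c) := by
      unfold tfn
      exact ((innerSL ℝ w).contDiff).sub contDiff_const
    exact this.contDiffAt
  exact (contDiffAt_Gfun h1 h2).comp x htcd

lemma bar_snd {N : ℕ} (w : EuclideanSpace ℝ (Fin N)) (c K : ℝ)
    {x : EuclideanSpace ℝ (Fin N)} (h1 : 0 < tfn w c x)
    (h2 : 0 < K - Real.log (tfn w c x)) :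
    DifferentiableAt ℝ (fderiv ℝ (bar w c K)) x ∧
    fderiv ℝ (fderiv ℝ (bar w c K)) x
      = (Gfun'' K (tfn w c x) • (innerSL ℝ w)).smulRight (innerSL ℝ w) := by
  have hVnhds : {z : EuclideanSpace ℝ (Fin N) |
      0 < tfn w c z ∧ 0 < K - Real.log (tfn w c z)} ∈ 𝓝 x :=
    (good_set_open w c K).mem_nhds ⟨h1, h2⟩
  have hfd_eq : fderiv ℝ (bar w c K)
      =ᶠ[𝓝 x] fun z => Gfun' K (tfn w c z) • innerSL ℝ w := by
    filter_upwards [hVnhds] with z hz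
    exact (bar_hasFDerivAt w c K hz.1 hz.2).fderiv
  have hΨ : HasFDerivAt
      (fun z : EuclideanSpace ℝ (Fin N) => Gfun' K (tfn w c z) • (innerSL ℝ w))
      ((Gfun'' K (tfn w c x) • (innerSL ℝ w)).smulRight (innerSL ℝ w)) x := by
    have hcomp : HasFDerivAt (fun z : EuclideanSpace ℝ (Fin N) => Gfun' K (tfn w c z))
        (Gfun'' K (tfn w c x) • (innerSL ℝ w)) x := by
      have := (hasDerivAt_Gfun' h1 h2).comp_hasFDerivAt x (tfn_hasFDerivAt w c x)
      simpa [Function.comp_def] using this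
    have h := hcomp.smul (hasFDerivAt_const (innerSL ℝ w :
      EuclideanSpace ℝ (Fin N) →L[ℝ] ℝ) x)
    simp at h
    exact h
  constructor
  · rw [hfd_eq.differentiableAt_iff]
    exact hΨ.differentiableAt
  · rw [hfd_eq.fderiv_eq]
    exact hΨ.fderiv

lemma bar_lap_sum {N : ℕ} (w : EuclideanSpace ℝ (Fin N)) (hw : ‖w‖ = 1) (c K : ℝ)
    {x : EuclideanSpace ℝ (Fin N)} (h1 : 0 < tfn w c x)
    (h2 : 0 < K - Real.log (tfn w c x)) :
    ∑ i, fderiv ℝ (fderiv ℝ (bar w c K)) x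
        (EuclideanSpace.single i 1) (EuclideanSpace.single i 1)
      = Gfun'' K (tfn w c x) := by
  rw [(bar_snd w c K h1 h2).2]
  have hterm : ∀ i : Fin N,
      ((Gfun'' K (tfn w c x) • (innerSL ℝ w)).smulRight (innerSL ℝ w))
        (EuclideanSpace.single i 1) (EuclideanSpace.single i 1)
      = Gfun'' K (tfn w c x) * (w i * w i) := by
    intro i
    have hin : (innerSL ℝ w) (EuclideanSpace.single i (1:ℝ)) = w i := by
      simp [innerSL_apply_apply, EuclideanSpace.inner_single_right]
    simp [ContinuousLinearMap.smulRight_apply, ContinuousLinearMap.smul_apply, hin]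
    ring
  rw [Finset.sum_congr rfl (fun i _ => hterm i), ← Finset.mul_sum]
  have hsum : ∑ i, w i * w i = 1 := by
    have hn := EuclideanSpace.norm_eq w
    have h2' : ‖w‖ ^ 2 = ∑ i, ‖w i‖ ^ 2 := by
      rw [hn, Real.sq_sqrt]
      positivity
    rw [hw] at h2'
    simp only [Real.norm_eq_abs, sq_abs] at h2'
    have := h2'.symm
    simpa [pow_two] using this
  rw [hsum, mul_one]

/-- The Laplacian of `f` at `x`: the sum of the (pure) second partial derivatives. -/
noncomputable def laplacian {N : ℕ} (f : EuclideanSpace ℝ (Fin N) → ℝ)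
    (x : EuclideanSpace ℝ (Fin N)) : ℝ :=
  ∑ i : Fin N,
    iteratedFDeriv ℝ 2 f x ![EuclideanSpace.single i 1, EuclideanSpace.single i 1]

lemma laplacian_eq_sum {N : ℕ} (f : EuclideanSpace ℝ (Fin N) → ℝ)
    (x : EuclideanSpace ℝ (Fin N)) :
    laplacian f x = ∑ i : Fin N, fderiv ℝ (fderiv ℝ f) x
      (EuclideanSpace.single i 1) (EuclideanSpace.single i 1) := by
  unfold laplacian
  congr 1
  funext i
  rw [iteratedFDeriv_two_apply]
  simp

/-- maximum principle for the critical Hardy operator `-Δ - 1/(4d²)` in a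
bounded convex domain: a subsolution `u` with
`limsup_{d(x)→0} u(x)/(√(d(x)) |log d(x)|) ≤ 0` (uniformly) is nonpositive. -/
theorem stmt_14 {N : ℕ} (hN : 2 ≤ N)
    (Ω : Set (EuclideanSpace ℝ (Fin N))) (hΩo : IsOpen Ω) (hΩb : Bornology.IsBounded Ω)
    (hΩconv : Convex ℝ Ω)
    (β₀ : ℝ) (hβ₀ : 0 < β₀)
    (hdC : ContDiffOn ℝ 2 (fun x => Metric.infDist x Ωᶜ)
      {x | x ∈ Ω ∧ Metric.infDist x Ωᶜ < β₀})
    (hgrad : ∀ x ∈ {x | x ∈ Ω ∧ Metric.infDist x Ωᶜ < β₀},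
      ‖fderiv ℝ (fun y => Metric.infDist y Ωᶜ) x‖ = 1)
    (u : EuclideanSpace ℝ (Fin N) → ℝ) (huC : ContDiffOn ℝ 2 u Ω)
    (hsub : ∀ x ∈ Ω,
      0 ≤ laplacian u x + u x / (4 * (Metric.infDist x Ωᶜ) ^ 2))
    (hbdry : ∀ ε : ℝ, 0 < ε → ∃ δ : ℝ, 0 < δ ∧ δ < 1 ∧
      ∀ x ∈ Ω, Metric.infDist x Ωᶜ < δ →
        u x ≤ ε * Real.sqrt (Metric.infDist x Ωᶜ)
          * |Real.log (Metric.infDist x Ωᶜ)|) :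
    ∀ x ∈ Ω, u x ≤ 0 := by
  classical
  intro x₀ hx₀
  by_contra hpos
  push_neg at hpos
  -- bound the domain
  obtain ⟨R₀, hR₀⟩ := hΩb.subset_closedBall 0
  set R : ℝ := max R₀ 0 with hRdef
  have hR : Ω ⊆ Metric.closedBall 0 R :=
    subset_trans hR₀ (Metric.closedBall_subset_closedBall (le_max_left _ _))
  have hR0 : (0:ℝ) ≤ R := le_max_right _ _
  -- the complement is nonempty
  have hi0 : (0:ℕ) < N := by omega
  set p₀ : EuclideanSpace ℝ (Fin N) :=
    (R+1) • EuclideanSpace.single (⟨0, hi0⟩ : Fin N) (1:ℝ) with hp₀def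
  have hp₀norm : ‖p₀‖ = R+1 := by
    rw [hp₀def, norm_smul, EuclideanSpace.norm_single]
    simp [abs_of_nonneg (by linarith : (0:ℝ) ≤ R+1)]
  have hp₀ : p₀ ∈ Ωᶜ := by
    intro h
    have := hR h
    rw [Metric.mem_closedBall, dist_zero_right, hp₀norm] at this
    linarith
  have hne : Ωᶜ.Nonempty := ⟨p₀, hp₀⟩
  -- positivity and boundedness of the distance function
  have hd_cont : Continuous (fun z : EuclideanSpace ℝ (Fin N) => Metric.infDist z Ωᶜ) :=
    Metric.continuous_infDist_pt Ωᶜ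
  have hd_pos : ∀ z ∈ Ω, 0 < Metric.infDist z Ωᶜ := by
    intro z hz
    exact ((hΩo.isClosed_compl).notMem_iff_infDist_pos hne).1 (by simpa using hz)
  have hd_le : ∀ z ∈ Ω, Metric.infDist z Ωᶜ ≤ 2*R+1 := by
    intro z hz
    have h1 : Metric.infDist z Ωᶜ ≤ dist z p₀ := Metric.infDist_le_dist_of_mem hp₀
    have h2 : dist z p₀ ≤ ‖z‖ + ‖p₀‖ := by
      rw [dist_eq_norm]; exact norm_sub_le _ _
    have h3 : ‖z‖ ≤ R := by
      have := hR hz; rwa [Metric.mem_closedBall, dist_zero_right] at this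
    rw [hp₀norm] at h2
    linarith
  -- constants
  set s₁ : ℝ := 4*R + 2 with hs₁def
  have hs₁pos : 0 < s₁ := by rw [hs₁def]; linarith
  set K : ℝ := 3 + max (Real.log s₁) 0 with hKdef
  have hK3 : ∀ s : ℝ, 0 < s → s ≤ s₁ → 3 ≤ K - Real.log s := by
    intro s h1 h2
    have h3 : Real.log s ≤ Real.log s₁ := Real.log_le_log h1 h2
    have h4 : Real.log s ≤ max (Real.log s₁) 0 := le_trans h3 (le_max_left _ _)
    rw [hKdef]; linarith
  have hK1 : 1 ≤ K := by
    rw [hKdef]; have := le_max_right (Real.log s₁) 0; linarith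
  have hd_le_s₁ : ∀ z ∈ Ω, Metric.infDist z Ωᶜ ≤ s₁ := by
    intro z hz; have := hd_le z hz; rw [hs₁def]; linarith
  -- the global barrier Φ
  set Φ : EuclideanSpace ℝ (Fin N) → ℝ :=
    fun z => Gfun K (Metric.infDist z Ωᶜ) with hΦdef
  have hΦpos : ∀ z ∈ Ω, 0 < Φ z := by
    intro z hz
    exact Gfun_pos (hd_pos z hz)
      (by have := hK3 _ (hd_pos z hz) (hd_le_s₁ z hz); linarith)
  set m₀ : ℝ := u x₀ / Φ x₀ with hm₀def
  have hm₀ : 0 < m₀ := div_pos hpos (hΦpos x₀ hx₀)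
  obtain ⟨δ, hδ0, hδ1, hδprop⟩ := hbdry (m₀/2) (by positivity)
  set δ' : ℝ := min δ (Metric.infDist x₀ Ωᶜ) with hδ'def
  have hδ'0 : 0 < δ' := lt_min hδ0 (hd_pos x₀ hx₀)
  -- the compact core
  set Kc : Set (EuclideanSpace ℝ (Fin N)) := {z | δ' ≤ Metric.infDist z Ωᶜ} with hKcdef
  have hKcΩ : Kc ⊆ Ω := by
    intro z hz
    have h1 : 0 < Metric.infDist z Ωᶜ := lt_of_lt_of_le hδ'0 hz
    have h2 : z ∉ Ωᶜ := ((hΩo.isClosed_compl).notMem_iff_infDist_pos hne).2 h1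
    simpa using h2
  have hKc_closed : IsClosed Kc := isClosed_le continuous_const hd_cont
  have hKc_cpt : IsCompact Kc :=
    Metric.isCompact_of_isClosed_isBounded hKc_closed (hΩb.subset hKcΩ)
  have hx₀Kc : x₀ ∈ Kc := min_le_right δ (Metric.infDist x₀ Ωᶜ)
  have hcontΦ : ∀ z ∈ Kc, ContinuousAt Φ z := by
    intro z hz
    have h1 : 0 < Metric.infDist z Ωᶜ := hd_pos z (hKcΩ hz)
    have h2 : 0 < K - Real.log (Metric.infDist z Ωᶜ) := by
      have := hK3 _ h1 (hd_le_s₁ z (hKcΩ hz)); linarith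
    have h3 : ContinuousAt (fun z : EuclideanSpace ℝ (Fin N) => Metric.infDist z Ωᶜ) z :=
      hd_cont.continuousAt
    have h4 := ContinuousAt.comp (g := Gfun K)
      (f := fun z : EuclideanSpace ℝ (Fin N) => Metric.infDist z Ωᶜ) (x := z)
      (contDiffAt_Gfun h1 h2).continuousAt h3
    simpa [Function.comp_def] using h4
  have hcont_h : ContinuousOn (fun z => u z / Φ z) Kc := by
    apply ContinuousOn.div (huC.continuousOn.mono hKcΩ)
      (fun z hz => (hcontΦ z hz).continuousWithinAt)
      (fun z hz => (hΦpos z (hKcΩ hz)).ne')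
  obtain ⟨xs, hxsKc, hxsmax⟩ := hKc_cpt.exists_isMaxOn ⟨x₀, hx₀Kc⟩ hcont_h
  have hxsΩ : xs ∈ Ω := hKcΩ hxsKc
  set M : ℝ := u xs / Φ xs with hMdef
  have hm₀M : m₀ ≤ M := hxsmax hx₀Kc
  have hM : 0 < M := lt_of_lt_of_le hm₀ hm₀M
  have hds : 0 < Metric.infDist xs Ωᶜ := hd_pos xs hxsΩ
  -- global upper bound u ≤ M Φ on Ω
  have hUB : ∀ z ∈ Ω, u z ≤ M * Φ z := by
    intro z hz
    rcases le_or_gt δ' (Metric.infDist z Ωᶜ) with hcase | hcase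
    · exact (div_le_iff₀ (hΦpos z hz)).1 (hxsmax hcase)
    · have hdz1 : Metric.infDist z Ωᶜ < δ := lt_of_lt_of_le hcase (min_le_left _ _)
      have h1 := hδprop z hz hdz1
      have h2 : Real.sqrt (Metric.infDist z Ωᶜ) * |Real.log (Metric.infDist z Ωᶜ)|
          ≤ Gfun K (Metric.infDist z Ωᶜ) :=
        Gfun_dominates (hd_pos z hz) (lt_trans hdz1 hδ1) hK1
      have h3 : u z ≤ (m₀/2) * Gfun K (Metric.infDist z Ωᶜ) := by
        calc u z ≤ m₀/2 * Real.sqrt (Metric.infDist z Ωᶜ)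
              * |Real.log (Metric.infDist z Ωᶜ)| := h1
          _ = (m₀/2) * (Real.sqrt (Metric.infDist z Ωᶜ)
              * |Real.log (Metric.infDist z Ωᶜ)|) := by ring
          _ ≤ (m₀/2) * Gfun K (Metric.infDist z Ωᶜ) := by
              exact mul_le_mul_of_nonneg_left h2 (by positivity)
      have h4 : (m₀/2) * Φ z ≤ M * Φ z := by
        apply mul_le_mul_of_nonneg_right _ (hΦpos z hz).le
        linarith
      calc u z ≤ (m₀/2) * Φ z := h3
        _ ≤ M * Φ z := h4
  have hequal : u xs = M * Φ xs := by
    rw [hMdef, div_mul_cancel₀ _ (hΦpos xs hxsΩ).ne']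
  -- nearest point and separating hyperplane
  obtain ⟨y, hyc, hy_eq⟩ := (hΩo.isClosed_compl).exists_infDist_eq_dist hne xs
  obtain ⟨f, hf⟩ := geometric_hahn_banach_open_point hΩconv hΩo (show y ∉ Ω by simpa using hyc)
  set ν : EuclideanSpace ℝ (Fin N) := (InnerProductSpace.toDual ℝ _).symm f with hνdef
  have hνf : ∀ z : EuclideanSpace ℝ (Fin N), ⟪ν, z⟫ = f z := fun z =>
    InnerProductSpace.toDual_symm_apply
  have hν0 : ν ≠ 0 := by
    intro h
    have h1 := hf x₀ hx₀
    have e1 : f x₀ = 0 := by rw [← hνf, h, inner_zero_left]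
    have e2 : f y = 0 := by rw [← hνf, h, inner_zero_left]
    rw [e1, e2] at h1; exact lt_irrefl 0 h1
  have hνnorm : 0 < ‖ν‖ := norm_pos_iff.2 hν0
  set w : EuclideanSpace ℝ (Fin N) := (-(‖ν‖⁻¹)) • ν with hwdef
  have hw1 : ‖w‖ = 1 := by
    rw [hwdef, norm_smul, norm_neg, norm_inv, norm_norm]
    exact inv_mul_cancel₀ hνnorm.ne'
  set c : ℝ := ⟪w, y⟫ with hcdef
  have hwz : ∀ z : EuclideanSpace ℝ (Fin N), tfn w c z = ‖ν‖⁻¹ * (f y - f z) := by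
    intro z
    rw [tfn, hcdef, hwdef, real_inner_smul_left, real_inner_smul_left, hνf, hνf]
    ring
  have htpos : ∀ z ∈ Ω, 0 < tfn w c z := by
    intro z hz
    rw [hwz]
    exact mul_pos (inv_pos.2 hνnorm) (sub_pos.2 (hf z hz))
  have hB : ∀ z ∈ Ω, Metric.infDist z Ωᶜ ≤ tfn w c z := by
    intro z hz
    set z' : EuclideanSpace ℝ (Fin N) := z - (tfn w c z) • w with hz'def
    have hz'c : z' ∈ Ωᶜ := by
      by_contra h
      have hz'Ω : z' ∈ Ω := by simpa using h
      have h1 := hf z' hz'Ω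
      have h2 : f z' = f y := by
        have e1 : ⟪ν, z'⟫ = ⟪ν, z⟫ - (tfn w c z) * ⟪ν, w⟫ := by
          rw [hz'def, inner_sub_right, real_inner_smul_right]
        have e2 : ⟪ν, w⟫ = -‖ν‖ := by
          rw [hwdef, real_inner_smul_right, real_inner_self_eq_norm_mul_norm]
          field_simp
        have e4 : (⟪ν, z'⟫ : ℝ) = f z + (f y - f z) := by
          rw [e1, e2, hwz, hνf]
          field_simp
          ring
        rw [← hνf, e4]
        ring
      rw [h2] at h1; exact lt_irrefl _ h1
    have h3 : Metric.infDist z Ωᶜ ≤ dist z z' := Metric.infDist_le_dist_of_mem hz'c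
    have h4 : dist z z' = tfn w c z := by
      rw [hz'def, dist_eq_norm]
      simp only [sub_sub_cancel]
      rw [norm_smul, hw1, mul_one, Real.norm_eq_abs, abs_of_pos (htpos z hz)]
    rw [h4] at h3; exact h3
  have htub : ∀ z ∈ Ω, tfn w c z ≤ s₁ := by
    intro z hz
    have h1 : tfn w c z = ⟪w, z - y⟫ := by rw [tfn, hcdef, inner_sub_right]
    have h2 : ⟪w, z - y⟫ ≤ ‖w‖ * ‖z - y‖ := real_inner_le_norm _ _
    rw [hw1, one_mul] at h2
    have h3 : ‖z - y‖ ≤ ‖z‖ + ‖y‖ := norm_sub_le _ _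
    have h4 : ‖y‖ ≤ ‖xs‖ + ‖xs - y‖ := by
      simpa [sub_sub_cancel] using norm_sub_le xs (xs - y)
    have h5 : ‖xs - y‖ = Metric.infDist xs Ωᶜ := by
      rw [hy_eq, dist_eq_norm]
    have h6 : Metric.infDist xs Ωᶜ ≤ 2*R+1 := hd_le xs hxsΩ
    have h7 : ‖xs‖ ≤ R := by
      have := hR hxsΩ; rwa [Metric.mem_closedBall, dist_zero_right] at this
    have h8 : ‖z‖ ≤ R := by
      have := hR hz; rwa [Metric.mem_closedBall, dist_zero_right] at this
    rw [h1]
    rw [hs₁def]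
    have := h5 ▸ h6
    calc ⟪w, z - y⟫ ≤ ‖z - y‖ := h2
      _ ≤ ‖z‖ + ‖y‖ := h3
      _ ≤ R + (‖xs‖ + ‖xs - y‖) := by linarith
      _ ≤ R + (R + (2*R+1)) := by linarith
      _ ≤ 4*R + 2 := by linarith
  have hCeq : tfn w c xs = Metric.infDist xs Ωᶜ := by
    apply le_antisymm _ (hB xs hxsΩ)
    have h1 : tfn w c xs = ⟪w, xs - y⟫ := by rw [tfn, hcdef, inner_sub_right]
    have h2 : ⟪w, xs - y⟫ ≤ ‖w‖ * ‖xs - y‖ := real_inner_le_norm _ _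
    rw [hw1, one_mul] at h2
    rw [h1, hy_eq, dist_eq_norm]
    exact h2
  -- barrier conditions at xs
  have ht_xs_pos : 0 < tfn w c xs := by rw [hCeq]; exact hds
  have hL_xs : 0 < K - Real.log (tfn w c xs) := by
    rw [hCeq]
    have := hK3 _ hds (hd_le_s₁ xs hxsΩ); linarith
  -- Φ ≤ bar on Ω
  have hΦbar : ∀ z ∈ Ω, Φ z ≤ bar w c K z := by
    intro z hz
    exact Gfun_mono (hd_pos z hz) (hB z hz) (hK3 _ (htpos z hz) (htub z hz))
  have hbarxs : bar w c K xs = Φ xs := by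
    rw [bar, hCeq]
  -- the function v = u - M * bar has a local max at xs
  set v : EuclideanSpace ℝ (Fin N) → ℝ := fun z => u z - M * bar w c K z with hvdef
  have hvxs : v xs = 0 := by
    rw [hvdef]; simp only []
    rw [hbarxs, ← hequal]; ring
  have hvmax : IsLocalMax v xs := by
    have : ∀ᶠ z in nhds xs, v z ≤ v xs := by
      filter_upwards [hΩo.mem_nhds hxsΩ] with z hz
      have h1 : u z ≤ M * Φ z := hUB z hz
      have h2 : M * Φ z ≤ M * bar w c K z :=
        mul_le_mul_of_nonneg_left (hΦbar z hz) hM.le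
      rw [hvxs, hvdef]
      simp only []
      linarith
    exact this
  have hucd : ContDiffAt ℝ 2 u xs := huC.contDiffAt (hΩo.mem_nhds hxsΩ)
  have hφcd : ContDiffAt ℝ 2 (bar w c K) xs := bar_contDiffAt w c K ht_xs_pos hL_xs
  have hvcd : ContDiffAt ℝ 2 v xs := hucd.sub (contDiffAt_const.mul hφcd)
  -- comparison of second derivatives
  have hfd_ev : fderiv ℝ v =ᶠ[nhds xs]
      fun z => fderiv ℝ u z - M • fderiv ℝ (bar w c K) z := by
    filter_upwards [hΩo.mem_nhds hxsΩ,
      (good_set_open w c K).mem_nhds (Set.mem_setOf.2 ⟨ht_xs_pos, hL_xs⟩)] with z hz hz2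
    have hud : DifferentiableAt ℝ u z :=
      (huC.contDiffAt (hΩo.mem_nhds hz)).differentiableAt (by norm_num)
    have hφd : DifferentiableAt ℝ (bar w c K) z :=
      (bar_hasFDerivAt w c K hz2.1 hz2.2).differentiableAt
    rw [hvdef]
    rw [fderiv_fun_sub hud (hφd.const_mul M), fderiv_const_mul hφd M]
  have hFud : DifferentiableAt ℝ (fderiv ℝ u) xs :=
    (hucd.fderiv_right (m := 1) (by norm_num)).differentiableAt (by norm_num)
  have hFφd : DifferentiableAt ℝ (fderiv ℝ (bar w c K)) xs :=
    (bar_snd w c K ht_xs_pos hL_xs).1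
  have hsplit : fderiv ℝ (fderiv ℝ v) xs
      = fderiv ℝ (fderiv ℝ u) xs - M • fderiv ℝ (fderiv ℝ (bar w c K)) xs := by
    rw [hfd_ev.fderiv_eq, fderiv_fun_sub hFud (hFφd.fun_const_smul M), fderiv_fun_const_smul hFφd M]
  have hlapv : ∀ i : Fin N, fderiv ℝ (fderiv ℝ v) xs
      (EuclideanSpace.single i 1) (EuclideanSpace.single i 1) ≤ 0 := fun i =>
    snd_dirderiv_nonpos_of_isLocalMax hvcd hvmax _
  have hbarsum : ∑ i, fderiv ℝ (fderiv ℝ (bar w c K)) xs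
      (EuclideanSpace.single i 1) (EuclideanSpace.single i 1)
      = Gfun'' K (Metric.infDist xs Ωᶜ) := by
    rw [bar_lap_sum w hw1 c K ht_xs_pos hL_xs, hCeq]
  have hlapu : laplacian u xs ≤ M * Gfun'' K (Metric.infDist xs Ωᶜ) := by
    rw [laplacian_eq_sum]
    have hsum_split : ∀ i : Fin N,
        fderiv ℝ (fderiv ℝ u) xs (EuclideanSpace.single i 1) (EuclideanSpace.single i 1)
        = fderiv ℝ (fderiv ℝ v) xs (EuclideanSpace.single i 1) (EuclideanSpace.single i 1)
          + M * fderiv ℝ (fderiv ℝ (bar w c K)) xs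
            (EuclideanSpace.single i 1) (EuclideanSpace.single i 1) := by
      intro i
      rw [hsplit]
      simp [ContinuousLinearMap.sub_apply, ContinuousLinearMap.smul_apply]
    calc ∑ i, fderiv ℝ (fderiv ℝ u) xs
          (EuclideanSpace.single i 1) (EuclideanSpace.single i 1)
        = ∑ i, (fderiv ℝ (fderiv ℝ v) xs
            (EuclideanSpace.single i 1) (EuclideanSpace.single i 1)
          + M * fderiv ℝ (fderiv ℝ (bar w c K)) xs
            (EuclideanSpace.single i 1) (EuclideanSpace.single i 1)) :=
          Finset.sum_congr rfl (fun i _ => hsum_split i)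
      _ = (∑ i, fderiv ℝ (fderiv ℝ v) xs
            (EuclideanSpace.single i 1) (EuclideanSpace.single i 1))
          + M * ∑ i, fderiv ℝ (fderiv ℝ (bar w c K)) xs
            (EuclideanSpace.single i 1) (EuclideanSpace.single i 1) := by
          rw [Finset.sum_add_distrib, Finset.mul_sum]
      _ ≤ 0 + M * Gfun'' K (Metric.infDist xs Ωᶜ) := by
          rw [hbarsum]
          have : (∑ i, fderiv ℝ (fderiv ℝ v) xs
              (EuclideanSpace.single i 1) (EuclideanSpace.single i 1)) ≤ 0 :=
            Finset.sum_nonpos (fun i _ => hlapv i)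
          linarith
      _ = M * Gfun'' K (Metric.infDist xs Ωᶜ) := by ring
  -- conclusion
  have hfin := hsub xs hxsΩ
  have hKL : 0 < K - Real.log (Metric.infDist xs Ωᶜ) := by rw [← hCeq]; exact hL_xs
  have hss := Gfun_supersol hds hKL
  have huxs : u xs = M * Gfun K (Metric.infDist xs Ωᶜ) := hequal
  rw [huxs] at hfin
  have hcontra : laplacian u xs
      + M * Gfun K (Metric.infDist xs Ωᶜ) / (4 * Metric.infDist xs Ωᶜ ^ 2) < 0 := by
    have h1 : M * Gfun K (Metric.infDist xs Ωᶜ) / (4 * Metric.infDist xs Ωᶜ ^ 2)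
        = M * (Gfun K (Metric.infDist xs Ωᶜ) / (4 * Metric.infDist xs Ωᶜ ^ 2)) := by ring
    rw [h1]
    have h2 : M * Gfun'' K (Metric.infDist xs Ωᶜ)
        + M * (Gfun K (Metric.infDist xs Ωᶜ) / (4 * Metric.infDist xs Ωᶜ ^ 2))
        = M * (Gfun'' K (Metric.infDist xs Ωᶜ)
            + Gfun K (Metric.infDist xs Ωᶜ) / (4 * Metric.infDist xs Ωᶜ ^ 2)) := by ring
    have h3 : M * (Gfun'' K (Metric.infDist xs Ωᶜ)
        + Gfun K (Metric.infDist xs Ωᶜ) / (4 * Metric.infDist xs Ωᶜ ^ 2)) < 0 :=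
      mul_neg_of_pos_of_neg hM hss
    linarith
  linarith
end

section
/- Let N ≥ 3, let Ω ⊂ ℝ^N be a bounded open set with 0 ∈ ∂Ω, let 0 < κ ≤ 1/4, set α = α₊ = 1 + √(1 − 4κ), and let 1 < q < q_c where q_c = (N + α/2)/(N − 2 + α/2). Define K̃(x) = d(x)^{α/2}·|x|^{2 − N − α} for x ∈ Ω and G̃(x, y) = min{ |x − y|^{2−N}, d(x)^{α/2}·d(y)^{α/2}·|x − y|^{2 − N − α} } for x ≠ y in Ω. Then ∫_Ω G̃(x, y)·K̃(y)^q dy is finite for x ∈ Ω and lim_{x → 0, x ∈ Ω} (∫_Ω G̃(x, y)·K̃(y)^q dy)/K̃(x) = 0; that is, for every ε > 0 there exists δ > 0 such that ∫_Ω G̃(x, y)·K̃(y)^q dy ≤ ε·K̃(x) for all x ∈ Ω with |x| < δ. -/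
open MeasureTheory

open Metric Set Filter

section aux15

lemma aux_int_norm_rpow {N : ℕ} {c : ℝ} (hc0 : c < 0)
    (hcN : -(N : ℝ) < c) {r : ℝ} :
    IntegrableOn (fun z : EuclideanSpace ℝ (Fin N) => ‖z‖ ^ c) (Metric.ball 0 r) := by
  have hmeas : Measurable (fun z : EuclideanSpace ℝ (Fin N) => ‖z‖ ^ c) :=
    measurable_norm.pow measurable_const
  constructor
  · exact hmeas.aestronglyMeasurable.restrict
  · rw [hasFiniteIntegral_iff_ofReal
      (Eventually.of_forall fun z => Real.rpow_nonneg (norm_nonneg z) c)]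
    set μ : Measure (EuclideanSpace ℝ (Fin N)) := volume.restrict (Metric.ball 0 r) with hμ
    rw [lintegral_eq_lintegral_meas_le μ
      (Eventually.of_forall fun z => Real.rpow_nonneg (norm_nonneg z) c)
      hmeas.aemeasurable]
    have hsub : ∀ t : ℝ, 0 < t → {a : EuclideanSpace ℝ (Fin N) | t ≤ ‖a‖ ^ c} ⊆
        Metric.closedBall 0 (t ^ c⁻¹) := by
      intro t ht a ha
      simp only [mem_setOf_eq] at ha
      rw [mem_closedBall_zero_iff]
      calc ‖a‖ = (‖a‖ ^ c) ^ c⁻¹ := by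
            rw [← Real.rpow_mul (norm_nonneg a), mul_inv_cancel₀ hc0.ne, Real.rpow_one]
        _ ≤ t ^ c⁻¹ := Real.rpow_le_rpow_of_nonpos ht ha (inv_nonpos.2 hc0.le)
    have hdim : Module.finrank ℝ (EuclideanSpace ℝ (Fin N)) = N := finrank_euclideanSpace_fin
    set T : ℝ := max 1 (r ^ c) with hT
    have hT0 : 0 < T := lt_max_of_lt_left one_pos
    have key : ∀ t : ℝ, t ∈ Ioi (0:ℝ) →
        μ {a : EuclideanSpace ℝ (Fin N) | t ≤ ‖a‖ ^ c} ≤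
          (Ioc 0 T).indicator (fun _ => volume (Metric.ball (0:EuclideanSpace ℝ (Fin N)) r)) t
          + (Ioi T).indicator
              (fun t => ENNReal.ofReal (t ^ (c⁻¹ * N)) *
                volume (Metric.ball (0:EuclideanSpace ℝ (Fin N)) 1)) t := by
      intro t ht
      rcases le_or_gt t T with h | h
      · refine le_trans ?_ (le_add_of_nonneg_right zero_le)
        rw [indicator_of_mem (show t ∈ Ioc 0 T from ⟨ht, h⟩)]
        exact le_trans (measure_mono (subset_univ _)) (by rw [hμ, Measure.restrict_apply_univ])
      · refine le_trans ?_ (le_add_of_nonneg_left zero_le)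
        rw [indicator_of_mem (show t ∈ Ioi T from h)]
        calc μ {a : EuclideanSpace ℝ (Fin N) | t ≤ ‖a‖ ^ c}
            ≤ volume {a : EuclideanSpace ℝ (Fin N) | t ≤ ‖a‖ ^ c} :=
              Measure.restrict_le_self _
          _ ≤ volume (Metric.closedBall (0:EuclideanSpace ℝ (Fin N)) (t ^ c⁻¹)) :=
              measure_mono (hsub t ht)
          _ = ENNReal.ofReal ((t ^ c⁻¹) ^ N) *
                volume (Metric.ball (0:EuclideanSpace ℝ (Fin N)) 1) := by
              rw [Measure.addHaar_closedBall _ _ (Real.rpow_nonneg ht.le _), hdim]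
          _ = ENNReal.ofReal (t ^ (c⁻¹ * N)) *
                volume (Metric.ball (0:EuclideanSpace ℝ (Fin N)) 1) := by
              rw [← Real.rpow_natCast (t ^ c⁻¹) N, ← Real.rpow_mul ht.le]
    calc ∫⁻ t in Ioi (0:ℝ), μ {a : EuclideanSpace ℝ (Fin N) | t ≤ ‖a‖ ^ c}
        ≤ ∫⁻ t in Ioi (0:ℝ),
            ((Ioc 0 T).indicator (fun _ => volume (Metric.ball (0:EuclideanSpace ℝ (Fin N)) r)) t
            + (Ioi T).indicator
              (fun t => ENNReal.ofReal (t ^ (c⁻¹ * N)) *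
                volume (Metric.ball (0:EuclideanSpace ℝ (Fin N)) 1)) t) :=
          setLIntegral_mono' measurableSet_Ioi key
      _ ≤ (∫⁻ t, (Ioc 0 T).indicator
              (fun _ => volume (Metric.ball (0:EuclideanSpace ℝ (Fin N)) r)) t)
          + ∫⁻ t, (Ioi T).indicator
              (fun t => ENNReal.ofReal (t ^ (c⁻¹ * N)) *
                volume (Metric.ball (0:EuclideanSpace ℝ (Fin N)) 1)) t := by
          rw [← lintegral_add_left]
          · exact setLIntegral_le_lintegral _ _
          · exact measurable_const.indicator measurableSet_Ioc
      _ < ⊤ := by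
          apply ENNReal.add_lt_top.2
          constructor
          · rw [lintegral_indicator measurableSet_Ioc, setLIntegral_const]
            exact ENNReal.mul_lt_top measure_ball_lt_top measure_Ioc_lt_top
          · rw [lintegral_indicator measurableSet_Ioi,
              lintegral_mul_const' _ _ measure_ball_lt_top.ne]
            apply ENNReal.mul_lt_top _ measure_ball_lt_top
            have hlt : c⁻¹ * N < -1 := by
              rw [← div_eq_inv_mul, div_lt_iff_of_neg hc0]
              linarith
            exact (integrableOn_Ioi_rpow_of_lt hlt hT0).setLIntegral_lt_top

lemma aux_trans {N : ℕ} {c r : ℝ}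
    (hint : IntegrableOn (fun z : EuclideanSpace ℝ (Fin N) => ‖z‖ ^ c) (Metric.ball 0 r))
    (x : EuclideanSpace ℝ (Fin N)) :
    IntegrableOn (fun y => ‖x - y‖ ^ c) (Metric.ball x r) ∧
    ∫ y in Metric.ball x r, ‖x - y‖ ^ c
      = ∫ z in Metric.ball (0 : EuclideanSpace ℝ (Fin N)) r, ‖z‖ ^ c := by
  set g : EuclideanSpace ℝ (Fin N) → ℝ :=
    (Metric.ball (0:EuclideanSpace ℝ (Fin N)) r).indicator (fun z => ‖z‖ ^ c) with hg
  have hgi : Integrable g :=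
    (integrable_indicator_iff measurableSet_ball).2 hint
  have hmem : ∀ y : EuclideanSpace ℝ (Fin N),
      x - y ∈ Metric.ball (0:EuclideanSpace ℝ (Fin N)) r ↔ y ∈ Metric.ball x r := by
    intro y
    rw [mem_ball_zero_iff, norm_sub_rev, ← dist_eq_norm, mem_ball]
  have hcomp : (fun y : EuclideanSpace ℝ (Fin N) => g (x - y)) =
      (Metric.ball x r).indicator (fun y => ‖x - y‖ ^ c) := by
    funext y
    by_cases hy : y ∈ Metric.ball x r
    · rw [indicator_of_mem hy, hg, indicator_of_mem ((hmem y).2 hy)]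
    · rw [indicator_of_notMem hy, hg, indicator_of_notMem (fun h => hy ((hmem y).1 h))]
  have hgi2 : Integrable (fun y : EuclideanSpace ℝ (Fin N) => g (x - y)) :=
    hgi.comp_sub_left x
  constructor
  · rw [hcomp] at hgi2
    exact (integrable_indicator_iff measurableSet_ball).1 hgi2
  · have h1 : ∫ y : EuclideanSpace ℝ (Fin N), g (x - y) = ∫ z, g z :=
      integral_sub_left_eq_self g volume x
    rw [hcomp] at h1
    rw [integral_indicator measurableSet_ball, integral_indicator measurableSet_ball] at h1
    exact h1

end aux15

set_option maxHeartbeats 2000000 in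
/-- in the subcritical range `1 < q < q_c`, the Green potential of the
`q`-th power of the Martin-kernel comparison expression
`K̃(x) = d(x)^{α/2} |x|^{2-N-α}` (pole at `0 ∈ ∂Ω`) is finite and is `o(K̃(x))` as
`x → 0` in `Ω`, where
`G̃(x,y) = min{|x-y|^{2-N}, d(x)^{α/2} d(y)^{α/2} |x-y|^{2-N-α}}`. -/
theorem stmt_15 {N : ℕ} (hN : 3 ≤ N)
    (Ω : Set (EuclideanSpace ℝ (Fin N))) (hΩo : IsOpen Ω) (hΩb : Bornology.IsBounded Ω)
    (h0 : (0 : EuclideanSpace ℝ (Fin N)) ∈ frontier Ω)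
    (κ α q : ℝ) (hκ0 : 0 < κ) (hκ1 : κ ≤ 1 / 4)
    (hα : α = 1 + Real.sqrt (1 - 4 * κ))
    (hq : 1 < q) (hqc : q < ((N : ℝ) + α / 2) / ((N : ℝ) - 2 + α / 2)) :
    (∀ x ∈ Ω,
      IntegrableOn
        (fun y =>
          min (‖x - y‖ ^ ((2 : ℝ) - N))
              ((Metric.infDist x Ωᶜ) ^ (α / 2) * (Metric.infDist y Ωᶜ) ^ (α / 2)
                * ‖x - y‖ ^ ((2 : ℝ) - N - α))
            * ((Metric.infDist y Ωᶜ) ^ (α / 2) * ‖y‖ ^ ((2 : ℝ) - N - α)) ^ q)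
        Ω volume) ∧
    ∀ ε : ℝ, 0 < ε → ∃ δ : ℝ, 0 < δ ∧
      ∀ x ∈ Ω, ‖x‖ < δ →
        (∫ y in Ω,
            min (‖x - y‖ ^ ((2 : ℝ) - N))
                ((Metric.infDist x Ωᶜ) ^ (α / 2) * (Metric.infDist y Ωᶜ) ^ (α / 2)
                  * ‖x - y‖ ^ ((2 : ℝ) - N - α))
              * ((Metric.infDist y Ωᶜ) ^ (α / 2) * ‖y‖ ^ ((2 : ℝ) - N - α)) ^ q) ≤
          ε * ((Metric.infDist x Ωᶜ) ^ (α / 2) * ‖x‖ ^ ((2 : ℝ) - N - α)) := by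
  have hN3 : (3:ℝ) ≤ (N:ℝ) := by exact_mod_cast hN
  -- 0 is not in Ω
  have h0n : (0 : EuclideanSpace ℝ (Fin N)) ∉ Ω := by
    rw [hΩo.frontier_eq] at h0
    exact h0.2
  have h0c : (0 : EuclideanSpace ℝ (Fin N)) ∈ Ωᶜ := h0n
  obtain ⟨R, hR0, hRΩ⟩ := hΩb.subset_ball_lt 0 0
  -- basic facts about α
  have hsq0 : 0 ≤ Real.sqrt (1 - 4 * κ) := Real.sqrt_nonneg _
  have hsq1 : Real.sqrt (1 - 4 * κ) < 1 := by
    refine (Real.sqrt_lt' one_pos).2 (by nlinarith)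
  have hα1 : 1 ≤ α := by rw [hα]; linarith
  have hα2 : α < 2 := by rw [hα] at *; linarith
  have hα0 : 0 < α := by linarith
  obtain ⟨b, hb⟩ : ∃ b : ℝ, b = (2 : ℝ) - N - α := ⟨_, rfl⟩
  rw [show ((2 : ℝ) - N - α) = b from hb.symm]
  obtain ⟨a, ha⟩ : ∃ a : ℝ, a = α / 2 + q * (2 - (N:ℝ) - α / 2) := ⟨_, rfl⟩
  have hbN : -(N:ℝ) < b := by rw [hb]; linarith
  have hb0 : b < 0 := by rw [hb]; linarith
  have haN : -(N:ℝ) < a := by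
    have hden : 0 < (N:ℝ) - 2 + α / 2 := by linarith
    rw [lt_div_iff₀ hden] at hqc
    have h1 : q * (2 - (N:ℝ) - α / 2) = -(q * ((N:ℝ) - 2 + α / 2)) := by ring
    rw [ha]; rw [h1]; linarith
  have ha0 : a < 0 := by
    have h2 : 2 - (N:ℝ) - α / 2 < 0 := by linarith
    have h3 : q * (2 - (N:ℝ) - α / 2) < 1 * (2 - (N:ℝ) - α / 2) :=
      mul_lt_mul_of_neg_right hq h2
    rw [ha]; linarith
  obtain ⟨c, hc⟩ : ∃ c : ℝ, c = (max (-(N:ℝ)) (a + b) + min a b) / 2 := ⟨_, rfl⟩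
  have hmaxmin : max (-(N:ℝ)) (a + b) < min a b :=
    max_lt (lt_min (by linarith) (by linarith)) (lt_min (by linarith) (by linarith))
  have hc_gt : max (-(N:ℝ)) (a + b) < c := by rw [hc]; linarith
  have hc_lt : c < min a b := by rw [hc]; linarith
  have hcN : -(N:ℝ) < c := (le_max_left _ _).trans_lt hc_gt
  have habc : a + b < c := (le_max_right _ _).trans_lt hc_gt
  have hca : c < a := hc_lt.trans_le (min_le_left _ _)
  have hcb : c < b := hc_lt.trans_le (min_le_right _ _)
  have hc0 : c < 0 := hca.trans ha0
  have hq0 : 0 < q := lt_trans one_pos hq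
  obtain ⟨K, hK⟩ : ∃ K : ℝ,
      K = (2:ℝ) ^ (c - a - b) + (2:ℝ) ^ (a - b - c) + (2:ℝ) ^ (a - c) := ⟨_, rfl⟩
  have h2pos : (0:ℝ) < 2 := by norm_num
  have hKp1 : 0 < (2:ℝ) ^ (c - a - b) := Real.rpow_pos_of_pos h2pos _
  have hKp2 : 0 < (2:ℝ) ^ (a - b - c) := Real.rpow_pos_of_pos h2pos _
  have hKp3 : 0 < (2:ℝ) ^ (a - c) := Real.rpow_pos_of_pos h2pos _
  have hK0 : 0 < K := by rw [hK]; linarith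
  have hK1 : (2:ℝ) ^ (c - a - b) ≤ K := by rw [hK]; linarith
  have hK2 : (2:ℝ) ^ (a - b - c) ≤ K := by rw [hK]; linarith
  have hK3 : (2:ℝ) ^ (a - c) ≤ K := by rw [hK]; linarith
  have hdivtwo : ∀ t e : ℝ, 0 ≤ t → (t / 2) ^ e = t ^ e * (2:ℝ) ^ (-e) := by
    intro t e ht
    rw [div_eq_mul_inv, Real.mul_rpow ht (by norm_num), Real.inv_rpow (by norm_num),
      ← Real.rpow_neg (by norm_num)]
  -- the master pointwise bound
  have master : ∀ x y : EuclideanSpace ℝ (Fin N), 0 < ‖x‖ →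
      min (‖x - y‖ ^ ((2 : ℝ) - N))
          ((Metric.infDist x Ωᶜ) ^ (α / 2) * (Metric.infDist y Ωᶜ) ^ (α / 2) * ‖x - y‖ ^ b)
        * ((Metric.infDist y Ωᶜ) ^ (α / 2) * ‖y‖ ^ b) ^ q
      ≤ ((Metric.infDist x Ωᶜ) ^ (α / 2) * (K * ‖x‖ ^ (a + b - c)))
          * (‖x - y‖ ^ c + ‖y‖ ^ c) := by
    intro x y hx0
    have hdx0 : 0 ≤ Metric.infDist x Ωᶜ := Metric.infDist_nonneg
    have hdy0 : 0 ≤ Metric.infDist y Ωᶜ := Metric.infDist_nonneg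
    have hdyle : Metric.infDist y Ωᶜ ≤ ‖y‖ := by
      simpa [dist_zero_right] using Metric.infDist_le_dist_of_mem h0c
    have hu0 : (0:ℝ) ≤ ‖x - y‖ := norm_nonneg _
    have hv0 : (0:ℝ) ≤ ‖y‖ := norm_nonneg _
    have hKQ0 : 0 ≤ ((Metric.infDist y Ωᶜ) ^ (α / 2) * ‖y‖ ^ b) ^ q :=
      Real.rpow_nonneg (mul_nonneg (Real.rpow_nonneg hdy0 _) (Real.rpow_nonneg hv0 _)) q
    -- first: drop the min
    have h1 : min (‖x - y‖ ^ ((2 : ℝ) - N))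
          ((Metric.infDist x Ωᶜ) ^ (α / 2) * (Metric.infDist y Ωᶜ) ^ (α / 2) * ‖x - y‖ ^ b)
        * ((Metric.infDist y Ωᶜ) ^ (α / 2) * ‖y‖ ^ b) ^ q
        ≤ ((Metric.infDist x Ωᶜ) ^ (α / 2) * (Metric.infDist y Ωᶜ) ^ (α / 2) * ‖x - y‖ ^ b)
          * ((Metric.infDist y Ωᶜ) ^ (α / 2) * ‖y‖ ^ b) ^ q :=
      mul_le_mul_of_nonneg_right (min_le_right _ _) hKQ0
    -- rewrite the q-power
    have hKQ : ((Metric.infDist y Ωᶜ) ^ (α / 2) * ‖y‖ ^ b) ^ q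
        = (Metric.infDist y Ωᶜ) ^ (α / 2 * q) * ‖y‖ ^ (b * q) := by
      rw [Real.mul_rpow (Real.rpow_nonneg hdy0 _) (Real.rpow_nonneg hv0 _),
        ← Real.rpow_mul hdy0, ← Real.rpow_mul hv0]
    have hsum : α / 2 + α / 2 * q + b * q = a := by rw [ha, hb]; ring
    have hsum_ne : α / 2 + α / 2 * q + b * q ≠ 0 := by rw [hsum]; exact ha0.ne
    have hne1 : α / 2 + α / 2 * q ≠ 0 := by positivity
    -- the d(y) power is dominated by the |y| power
    have key1 : (Metric.infDist y Ωᶜ) ^ (α / 2)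
        * ((Metric.infDist y Ωᶜ) ^ (α / 2 * q) * ‖y‖ ^ (b * q)) ≤ ‖y‖ ^ a := by
      calc (Metric.infDist y Ωᶜ) ^ (α / 2)
            * ((Metric.infDist y Ωᶜ) ^ (α / 2 * q) * ‖y‖ ^ (b * q))
          = ((Metric.infDist y Ωᶜ) ^ (α / 2) * (Metric.infDist y Ωᶜ) ^ (α / 2 * q))
              * ‖y‖ ^ (b * q) := by ring
        _ = (Metric.infDist y Ωᶜ) ^ (α / 2 + α / 2 * q) * ‖y‖ ^ (b * q) := by
            rw [Real.rpow_add' hdy0 hne1]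
        _ ≤ ‖y‖ ^ (α / 2 + α / 2 * q) * ‖y‖ ^ (b * q) :=
            mul_le_mul_of_nonneg_right
              (Real.rpow_le_rpow hdy0 hdyle (by positivity)) (Real.rpow_nonneg hv0 _)
        _ = ‖y‖ ^ (α / 2 + α / 2 * q + b * q) := by
            rw [show α / 2 + α / 2 * q + b * q = (α / 2 + α / 2 * q) + b * q by ring,
              Real.rpow_add' hv0 hsum_ne]
        _ = ‖y‖ ^ a := by rw [hsum]
    -- so the integrand is at most dx^{α/2} |x-y|^b |y|^a
    have h2 : ((Metric.infDist x Ωᶜ) ^ (α / 2) * (Metric.infDist y Ωᶜ) ^ (α / 2) * ‖x - y‖ ^ b)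
          * ((Metric.infDist y Ωᶜ) ^ (α / 2) * ‖y‖ ^ b) ^ q
        ≤ (Metric.infDist x Ωᶜ) ^ (α / 2) * (‖x - y‖ ^ b * ‖y‖ ^ a) := by
      rw [hKQ]
      calc ((Metric.infDist x Ωᶜ) ^ (α / 2) * (Metric.infDist y Ωᶜ) ^ (α / 2) * ‖x - y‖ ^ b)
            * ((Metric.infDist y Ωᶜ) ^ (α / 2 * q) * ‖y‖ ^ (b * q))
          = (Metric.infDist x Ωᶜ) ^ (α / 2) * (‖x - y‖ ^ b *
              ((Metric.infDist y Ωᶜ) ^ (α / 2)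
                * ((Metric.infDist y Ωᶜ) ^ (α / 2 * q) * ‖y‖ ^ (b * q)))) := by ring
        _ ≤ (Metric.infDist x Ωᶜ) ^ (α / 2) * (‖x - y‖ ^ b * ‖y‖ ^ a) := by
            apply mul_le_mul_of_nonneg_left _ (Real.rpow_nonneg hdx0 _)
            exact mul_le_mul_of_nonneg_left key1 (Real.rpow_nonneg hu0 _)
    -- now the three-case estimate for |x-y|^b |y|^a
    have hcase : ‖x - y‖ ^ b * ‖y‖ ^ a ≤ K * ‖x‖ ^ (a + b - c) * (‖x - y‖ ^ c + ‖y‖ ^ c) := by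
      have htermu : K * ‖x‖ ^ (a + b - c) * ‖x - y‖ ^ c
          ≤ K * ‖x‖ ^ (a + b - c) * (‖x - y‖ ^ c + ‖y‖ ^ c) := by
        apply mul_le_mul_of_nonneg_left (le_add_of_nonneg_right (Real.rpow_nonneg hv0 _))
        exact mul_nonneg hK0.le (Real.rpow_nonneg hx0.le _)
      have htermv : K * ‖x‖ ^ (a + b - c) * ‖y‖ ^ c
          ≤ K * ‖x‖ ^ (a + b - c) * (‖x - y‖ ^ c + ‖y‖ ^ c) := by
        apply mul_le_mul_of_nonneg_left (le_add_of_nonneg_left (Real.rpow_nonneg hu0 _))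
        exact mul_nonneg hK0.le (Real.rpow_nonneg hx0.le _)
      rcases le_or_gt ‖x - y‖ (‖x‖ / 2) with hI | hI
      · -- case I : near the singularity x
        have hvP : ‖x‖ / 2 ≤ ‖y‖ := by
          have h5 : ‖x‖ ≤ ‖x - y‖ + ‖y‖ := by
            simpa using norm_add_le (x - y) y
          linarith
        have hsplit : ‖x - y‖ ^ b = ‖x - y‖ ^ (b - c) * ‖x - y‖ ^ c := by
          rw [← Real.rpow_add' hu0 (by rw [sub_add_cancel]; exact hb0.ne), sub_add_cancel]
        refine le_trans ?_ htermu
        calc ‖x - y‖ ^ b * ‖y‖ ^ a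
            = ‖x - y‖ ^ (b - c) * ‖x - y‖ ^ c * ‖y‖ ^ a := by rw [hsplit]
          _ ≤ (‖x‖ / 2) ^ (b - c) * ‖x - y‖ ^ c * (‖x‖ / 2) ^ a := by
              apply mul_le_mul _ (Real.rpow_le_rpow_of_nonpos (by positivity) hvP ha0.le)
                (Real.rpow_nonneg hv0 _) (by positivity)
              exact mul_le_mul_of_nonneg_right
                (Real.rpow_le_rpow hu0 hI (by linarith)) (Real.rpow_nonneg hu0 _)
          _ = (2:ℝ) ^ (c - a - b) * ‖x‖ ^ (a + b - c) * ‖x - y‖ ^ c := by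
              rw [hdivtwo _ _ hx0.le, hdivtwo _ _ hx0.le,
                show a + b - c = (b - c) + a by ring, Real.rpow_add hx0,
                show c - a - b = (-(b - c)) + (-a) by ring, Real.rpow_add h2pos]
              ring
          _ ≤ K * ‖x‖ ^ (a + b - c) * ‖x - y‖ ^ c := by
              apply mul_le_mul_of_nonneg_right _ (Real.rpow_nonneg hu0 _)
              exact mul_le_mul_of_nonneg_right hK1 (Real.rpow_nonneg hx0.le _)
      rcases le_or_gt ‖y‖ (2 * ‖x‖) with hII | hIII
      · -- case II : y near the origin
        have hsplit : ‖y‖ ^ a = ‖y‖ ^ (a - c) * ‖y‖ ^ c := by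
          rw [← Real.rpow_add' hv0 (by rw [sub_add_cancel]; exact ha0.ne), sub_add_cancel]
        refine le_trans ?_ htermv
        calc ‖x - y‖ ^ b * ‖y‖ ^ a
            = ‖x - y‖ ^ b * (‖y‖ ^ (a - c) * ‖y‖ ^ c) := by rw [hsplit]
          _ ≤ (‖x‖ / 2) ^ b * ((2 * ‖x‖) ^ (a - c) * ‖y‖ ^ c) := by
              apply mul_le_mul (Real.rpow_le_rpow_of_nonpos (by positivity) hI.le hb0.le)
                (mul_le_mul_of_nonneg_right
                  (Real.rpow_le_rpow hv0 hII (by linarith)) (Real.rpow_nonneg hv0 _))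
                (mul_nonneg (Real.rpow_nonneg hv0 _) (Real.rpow_nonneg hv0 _))
                (Real.rpow_nonneg (by positivity) _)
          _ = (2:ℝ) ^ (a - b - c) * ‖x‖ ^ (a + b - c) * ‖y‖ ^ c := by
              rw [hdivtwo _ _ hx0.le, Real.mul_rpow (by norm_num) hx0.le,
                show a + b - c = b + (a - c) by ring, Real.rpow_add hx0,
                show a - b - c = (-b) + (a - c) by ring, Real.rpow_add h2pos]
              ring
          _ ≤ K * ‖x‖ ^ (a + b - c) * ‖y‖ ^ c := by
              apply mul_le_mul_of_nonneg_right _ (Real.rpow_nonneg hv0 _)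
              exact mul_le_mul_of_nonneg_right hK2 (Real.rpow_nonneg hx0.le _)
      · -- case III : y far away
        have hv0' : (0:ℝ) < ‖y‖ := by linarith
        have huv : ‖y‖ / 2 ≤ ‖x - y‖ := by
          have h5 : ‖y‖ - ‖x‖ ≤ ‖x - y‖ := by
            rw [norm_sub_rev]
            exact norm_sub_norm_le y x
          linarith
        have hab_ne : a + b ≠ 0 := (habc.trans hc0).ne
        have hsplit : ‖y‖ ^ (a + b) = ‖y‖ ^ (a + b - c) * ‖y‖ ^ c := by
          rw [← Real.rpow_add' hv0 (by rw [sub_add_cancel]; exact hab_ne), sub_add_cancel]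
        refine le_trans ?_ htermv
        calc ‖x - y‖ ^ b * ‖y‖ ^ a
            ≤ (‖y‖ / 2) ^ b * ‖y‖ ^ a := by
              apply mul_le_mul_of_nonneg_right _ (Real.rpow_nonneg hv0 _)
              exact Real.rpow_le_rpow_of_nonpos (by positivity) huv hb0.le
          _ = (2:ℝ) ^ (-b) * ‖y‖ ^ (a + b) := by
              rw [hdivtwo _ _ hv0, show a + b = b + a by ring, Real.rpow_add hv0']
              ring
          _ = (2:ℝ) ^ (-b) * (‖y‖ ^ (a + b - c) * ‖y‖ ^ c) := by rw [hsplit]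
          _ ≤ (2:ℝ) ^ (-b) * ((2 * ‖x‖) ^ (a + b - c) * ‖y‖ ^ c) := by
              apply mul_le_mul_of_nonneg_left _ (Real.rpow_nonneg h2pos.le _)
              apply mul_le_mul_of_nonneg_right _ (Real.rpow_nonneg hv0 _)
              exact Real.rpow_le_rpow_of_nonpos (by positivity) hIII.le (by linarith)
          _ = (2:ℝ) ^ (a - c) * ‖x‖ ^ (a + b - c) * ‖y‖ ^ c := by
              rw [Real.mul_rpow (by norm_num) hx0.le,
                show a - c = (-b) + (a + b - c) by ring, Real.rpow_add h2pos]
              ring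
          _ ≤ K * ‖x‖ ^ (a + b - c) * ‖y‖ ^ c := by
              apply mul_le_mul_of_nonneg_right _ (Real.rpow_nonneg hv0 _)
              exact mul_le_mul_of_nonneg_right hK3 (Real.rpow_nonneg hx0.le _)
    refine le_trans h1 (le_trans h2 ?_)
    calc (Metric.infDist x Ωᶜ) ^ (α / 2) * (‖x - y‖ ^ b * ‖y‖ ^ a)
        ≤ (Metric.infDist x Ωᶜ) ^ (α / 2)
            * (K * ‖x‖ ^ (a + b - c) * (‖x - y‖ ^ c + ‖y‖ ^ c)) :=
          mul_le_mul_of_nonneg_left hcase (Real.rpow_nonneg hdx0 _)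
      _ = ((Metric.infDist x Ωᶜ) ^ (α / 2) * (K * ‖x‖ ^ (a + b - c)))
            * (‖x - y‖ ^ c + ‖y‖ ^ c) := by ring
  -- integrability of the comparison kernels
  have hIc : IntegrableOn (fun z : EuclideanSpace ℝ (Fin N) => ‖z‖ ^ c)
      (Metric.ball 0 (2 * R)) := aux_int_norm_rpow hc0 hcN
  have hΩ2R : Ω ⊆ Metric.ball (0 : EuclideanSpace ℝ (Fin N)) (2 * R) :=
    hRΩ.trans (Metric.ball_subset_ball (by linarith))
  have hx0 : ∀ x ∈ Ω, 0 < ‖x‖ := by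
    intro x hx
    rcases (norm_nonneg x).lt_or_eq with h | h
    · exact h
    · exact absurd hx (by rw [show x = 0 from norm_eq_zero.1 h.symm]; exact h0n)
  have hsubx : ∀ x ∈ Ω, Ω ⊆ Metric.ball x (2 * R) := by
    intro x hx y hy
    rw [mem_ball]
    have h1 : dist y x ≤ dist y 0 + dist 0 x := dist_triangle _ _ _
    have h2 : dist y 0 < R := mem_ball.1 (hRΩ hy)
    have h3 : dist 0 x < R := by rw [dist_comm]; exact mem_ball.1 (hRΩ hx)
    linarith
  have hf0 : ∀ x y : EuclideanSpace ℝ (Fin N),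
      0 ≤ min (‖x - y‖ ^ ((2 : ℝ) - N))
          ((Metric.infDist x Ωᶜ) ^ (α / 2) * (Metric.infDist y Ωᶜ) ^ (α / 2) * ‖x - y‖ ^ b)
        * ((Metric.infDist y Ωᶜ) ^ (α / 2) * ‖y‖ ^ b) ^ q := by
    intro x y
    apply mul_nonneg
    · exact le_min (Real.rpow_nonneg (norm_nonneg _) _)
        (mul_nonneg (mul_nonneg (Real.rpow_nonneg Metric.infDist_nonneg _)
          (Real.rpow_nonneg Metric.infDist_nonneg _)) (Real.rpow_nonneg (norm_nonneg _) _))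
    · exact Real.rpow_nonneg (mul_nonneg (Real.rpow_nonneg Metric.infDist_nonneg _)
        (Real.rpow_nonneg (norm_nonneg _) _)) _
  have hdm : Measurable fun y : EuclideanSpace ℝ (Fin N) => Metric.infDist y Ωᶜ :=
    (Metric.continuous_infDist_pt Ωᶜ).measurable
  have hfm : ∀ x : EuclideanSpace ℝ (Fin N), Measurable fun y : EuclideanSpace ℝ (Fin N) =>
      min (‖x - y‖ ^ ((2 : ℝ) - N))
          ((Metric.infDist x Ωᶜ) ^ (α / 2) * (Metric.infDist y Ωᶜ) ^ (α / 2) * ‖x - y‖ ^ b)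
        * ((Metric.infDist y Ωᶜ) ^ (α / 2) * ‖y‖ ^ b) ^ q := by
    intro x
    apply Measurable.mul
    · apply Measurable.min
      · exact ((measurable_const.sub measurable_id).norm).pow measurable_const
      · exact (measurable_const.mul (hdm.pow measurable_const)).mul
          (((measurable_const.sub measurable_id).norm).pow measurable_const)
    · exact ((hdm.pow measurable_const).mul (measurable_norm.pow measurable_const)).pow
        measurable_const
  have h1Ω : ∀ x ∈ Ω, IntegrableOn (fun y => ‖x - y‖ ^ c) Ω := fun x hx =>
    (aux_trans hIc x).1.mono_set (hsubx x hx)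
  have h2Ω : IntegrableOn (fun y : EuclideanSpace ℝ (Fin N) => ‖y‖ ^ c) Ω :=
    hIc.mono_set hΩ2R
  have hGint : ∀ x ∈ Ω, IntegrableOn
      (fun y => ((Metric.infDist x Ωᶜ) ^ (α / 2) * (K * ‖x‖ ^ (a + b - c)))
        * (‖x - y‖ ^ c + ‖y‖ ^ c)) Ω := fun x hx =>
    ((h1Ω x hx).add h2Ω).const_mul _
  have hpart1 : ∀ x ∈ Ω, IntegrableOn
      (fun y =>
        min (‖x - y‖ ^ ((2 : ℝ) - N))
            ((Metric.infDist x Ωᶜ) ^ (α / 2) * (Metric.infDist y Ωᶜ) ^ (α / 2) * ‖x - y‖ ^ b)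
          * ((Metric.infDist y Ωᶜ) ^ (α / 2) * ‖y‖ ^ b) ^ q) Ω volume := by
    intro x hx
    apply Integrable.mono' (hGint x hx) ((hfm x).aestronglyMeasurable.restrict)
    refine Eventually.of_forall fun y => ?_
    rw [Real.norm_of_nonneg (hf0 x y)]
    exact master x y (hx0 x hx)
  refine ⟨hpart1, ?_⟩
  intro ε hε
  obtain ⟨I0, hI0⟩ : ∃ I0 : ℝ,
      I0 = ∫ z in Metric.ball (0 : EuclideanSpace ℝ (Fin N)) (2 * R), ‖z‖ ^ c := ⟨_, rfl⟩
  have hI00 : 0 ≤ I0 := by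
    rw [hI0]
    exact setIntegral_nonneg measurableSet_ball fun z _ => Real.rpow_nonneg (norm_nonneg z) c
  obtain ⟨D, hD⟩ : ∃ D : ℝ, D = K * (2 * I0) + 1 := ⟨_, rfl⟩
  have hD0 : 0 < D := by
    rw [hD]
    nlinarith [mul_nonneg hK0.le hI00]
  have htac : 0 < a - c := by linarith
  refine ⟨(ε / D) ^ (a - c)⁻¹, Real.rpow_pos_of_pos (div_pos hε hD0) _, ?_⟩
  intro x hx hxδ
  have hP : 0 < ‖x‖ := hx0 x hx
  have hxt : ‖x‖ ^ (a - c) ≤ ε / D := by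
    have h1 : ‖x‖ ^ (a - c) < ((ε / D) ^ (a - c)⁻¹) ^ (a - c) :=
      Real.rpow_lt_rpow (norm_nonneg x) hxδ htac
    have h2 : ((ε / D) ^ (a - c)⁻¹) ^ (a - c) = ε / D := by
      rw [← Real.rpow_mul (div_pos hε hD0).le, inv_mul_cancel₀ htac.ne', Real.rpow_one]
    linarith
  have hS1 : (∫ y in Ω, ‖x - y‖ ^ c) ≤ I0 := by
    calc (∫ y in Ω, ‖x - y‖ ^ c) ≤ ∫ y in Metric.ball x (2 * R), ‖x - y‖ ^ c :=
          setIntegral_mono_set (aux_trans hIc x).1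
            (Eventually.of_forall fun y => Real.rpow_nonneg (norm_nonneg _) c)
            ((hsubx x hx).eventuallyLE)
      _ = I0 := (aux_trans hIc x).2.trans hI0.symm
  have hS2 : (∫ y in Ω, ‖y‖ ^ c) ≤ I0 := by
    calc (∫ y in Ω, ‖y‖ ^ c)
        ≤ ∫ z in Metric.ball (0 : EuclideanSpace ℝ (Fin N)) (2 * R), ‖z‖ ^ c :=
          setIntegral_mono_set hIc
            (Eventually.of_forall fun y => Real.rpow_nonneg (norm_nonneg _) c)
            hΩ2R.eventuallyLE
      _ = I0 := hI0.symm
  have hC0 : 0 ≤ (Metric.infDist x Ωᶜ) ^ (α / 2) * (K * ‖x‖ ^ (a + b - c)) :=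
    mul_nonneg (Real.rpow_nonneg Metric.infDist_nonneg _)
      (mul_nonneg hK0.le (Real.rpow_nonneg hP.le _))
  have hdxb0 : 0 ≤ (Metric.infDist x Ωᶜ) ^ (α / 2) * ‖x‖ ^ b :=
    mul_nonneg (Real.rpow_nonneg Metric.infDist_nonneg _) (Real.rpow_nonneg hP.le _)
  calc (∫ y in Ω,
        min (‖x - y‖ ^ ((2 : ℝ) - N))
            ((Metric.infDist x Ωᶜ) ^ (α / 2) * (Metric.infDist y Ωᶜ) ^ (α / 2) * ‖x - y‖ ^ b)
          * ((Metric.infDist y Ωᶜ) ^ (α / 2) * ‖y‖ ^ b) ^ q)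
      ≤ ∫ y in Ω, ((Metric.infDist x Ωᶜ) ^ (α / 2) * (K * ‖x‖ ^ (a + b - c)))
          * (‖x - y‖ ^ c + ‖y‖ ^ c) :=
        setIntegral_mono_on (hpart1 x hx) (hGint x hx) hΩo.measurableSet
          (fun y _ => master x y hP)
    _ = ((Metric.infDist x Ωᶜ) ^ (α / 2) * (K * ‖x‖ ^ (a + b - c)))
          * ((∫ y in Ω, ‖x - y‖ ^ c) + ∫ y in Ω, ‖y‖ ^ c) := by
        rw [MeasureTheory.integral_const_mul, integral_add (h1Ω x hx) h2Ω]
    _ ≤ ((Metric.infDist x Ωᶜ) ^ (α / 2) * (K * ‖x‖ ^ (a + b - c))) * (I0 + I0) :=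
        mul_le_mul_of_nonneg_left (add_le_add hS1 hS2) hC0
    _ = (K * (2 * I0) * ‖x‖ ^ (a - c)) * ((Metric.infDist x Ωᶜ) ^ (α / 2) * ‖x‖ ^ b) := by
        rw [show a + b - c = b + (a - c) by ring, Real.rpow_add hP]
        ring
    _ ≤ (D * (ε / D)) * ((Metric.infDist x Ωᶜ) ^ (α / 2) * ‖x‖ ^ b) := by
        apply mul_le_mul_of_nonneg_right _ hdxb0
        calc K * (2 * I0) * ‖x‖ ^ (a - c) ≤ D * ‖x‖ ^ (a - c) := by
              apply mul_le_mul_of_nonneg_right _ (Real.rpow_nonneg hP.le _)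
              rw [hD]; linarith
          _ ≤ D * (ε / D) := mul_le_mul_of_nonneg_left hxt hD0.le
    _ = ε * ((Metric.infDist x Ωᶜ) ^ (α / 2) * ‖x‖ ^ b) := by
        rw [mul_comm D (ε / D), div_mul_cancel₀ ε hD0.ne']
end
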